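/- Every k-ary update procedure U (k ≥ 1) has a zero: there exists a k-tuple f = (f₁,…,f_k) of functions ℕ → ℕ with U f = ∅; moreover there is such a zero in which each f_i has finite support (f_i n ≠ 0 for only finitely many n). -/
import Mathlib

/-! Auxiliary machinery for the zero theorem for k-ary update procedures. -/

attribute [local instance] Classical.propDecidable

/-- Transfinite sequence of outer functions, driven by request/value maps `N`, `M`,
indexed by a well-ordering of `Set ℕ` (an uncountable well-order). -/
noncomputable def UpdAux.seq (N M : (ℕ → ℕ) → ℕ) : Set ℕ → ℕ → ℕ :=
  WellFounded.fix (IsWellFounded.wf (r := @WellOrderingRel (Set ℕ)))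
    (fun b rec p =>
      if h : ∃ a : {x : Set ℕ // WellOrderingRel x b}, N (rec a.1 a.2) = p
      then M (rec (Exists.choose h).1 (Exists.choose h).2) else 0)

lemma UpdAux.seq_eq (N M : (ℕ → ℕ) → ℕ) (b : Set ℕ) :
    UpdAux.seq N M b = fun p =>
      if h : ∃ a : {x : Set ℕ // WellOrderingRel x b}, N (UpdAux.seq N M a.1) = p
      then M (UpdAux.seq N M (Exists.choose h).1) else 0 :=
  WellFounded.fix_eq _ _ _

/-- The freezing argument: there is no pair of maps `N, M : (ℕ → ℕ) → ℕ` such that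
whenever `g₀` takes the requested value `M f₀` at the requested position `N f₀`,
the new request `N g₀` differs from `N f₀`.  Otherwise we could build an injection
from a well-ordering of `Set ℕ` into `ℕ`, contradicting Cantor. -/
lemma UpdAux.update_freeze (N M : (ℕ → ℕ) → ℕ)
    (hcond : ∀ f₀ g₀ : ℕ → ℕ, g₀ (N f₀) = M f₀ → N g₀ ≠ N f₀) : False := by
  set r := @WellOrderingRel (Set ℕ) with hr
  set g := UpdAux.seq N M with hg
  have main : ∀ b a : Set ℕ, r a b →
      g b (N (g a)) = M (g a) ∧ N (g b) ≠ N (g a) := by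
    intro b
    induction b using WellFounded.induction (IsWellFounded.wf (r := r)) with
    | _ b IH =>
      intro a hab
      have hval : g b (N (g a)) = M (g a) := by
        have hb := UpdAux.seq_eq N M b
        have hex : ∃ x : {x : Set ℕ // r x b}, N (UpdAux.seq N M x.1) = N (g a) :=
          ⟨⟨a, hab⟩, rfl⟩
        have h2 : UpdAux.seq N M b (N (g a)) =
            if h : ∃ x : {x : Set ℕ // r x b}, N (UpdAux.seq N M x.1) = N (g a)
            then M (UpdAux.seq N M (Exists.choose h).1) else 0 := congrFun hb _
        have h3 : g b (N (g a)) = M (UpdAux.seq N M (Exists.choose hex).1) :=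
          h2.trans (dif_pos hex)
        rw [h3]
        set c := Exists.choose hex with hc
        have hcspec : N (UpdAux.seq N M c.1) = N (g a) := Exists.choose_spec hex
        have hcb : r c.1 b := c.2
        rcases trichotomous_of r c.1 a with h1 | h1 | h1
        · exact absurd hcspec.symm (IH a hab c.1 h1).2
        · rw [h1]
        · exact absurd hcspec (IH c.1 hcb a h1).2
      exact ⟨hval, hcond (g a) (g b) hval⟩
  have inj : Function.Injective (fun s : Set ℕ => N (g s)) := by
    intro a b hab
    by_contra hne
    rcases trichotomous_of r a b with h1 | h1 | h1
    · exact (main b a h1).2 hab.symm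
    · exact hne h1
    · exact (main a b h1).2 hab
  exact Function.cantor_injective _ inj

/-- Truncation of a `(k+1)`-ary update procedure by fixing the first coordinate. -/
def UpdAux.trunc (k : ℕ) (U : (Fin (k + 1) → ℕ → ℕ) → Option (Fin (k + 1) × ℕ × ℕ))
    (f₀ : ℕ → ℕ) (h : Fin k → ℕ → ℕ) : Option (Fin k × ℕ × ℕ) :=
  match U (Fin.cons f₀ h) with
  | none => none
  | some p => Fin.cases none (fun i' => some (i', p.2)) p.1

lemma UpdAux.trunc_some {k : ℕ} {U : (Fin (k + 1) → ℕ → ℕ) → Option (Fin (k + 1) × ℕ × ℕ)}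
    {f₀ : ℕ → ℕ} {h : Fin k → ℕ → ℕ} {i : Fin k} {n m : ℕ}
    (hh : UpdAux.trunc k U f₀ h = some (i, n, m)) :
    U (Fin.cons f₀ h) = some (i.succ, n, m) := by
  rcases hU : U (Fin.cons f₀ h) with _ | ⟨i₀, q⟩
  · simp [UpdAux.trunc, hU] at hh
  · induction i₀ using Fin.cases with
    | zero => simp [UpdAux.trunc, hU] at hh
    | succ i₁ =>
      simp only [UpdAux.trunc, hU, Fin.cases_succ] at hh
      obtain ⟨rfl, rfl⟩ : i₁ = i ∧ q = (n, m) := by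
        simpa [Prod.ext_iff] using hh
      rfl

lemma UpdAux.trunc_none {k : ℕ} {U : (Fin (k + 1) → ℕ → ℕ) → Option (Fin (k + 1) × ℕ × ℕ)}
    {f₀ : ℕ → ℕ} {h : Fin k → ℕ → ℕ}
    (hh : UpdAux.trunc k U f₀ h = none)
    {p : Fin (k + 1) × ℕ × ℕ} (hp : U (Fin.cons f₀ h) = some p) :
    ∃ n m : ℕ, U (Fin.cons f₀ h) = some (0, n, m) := by
  obtain ⟨i₀, n₀, m₀⟩ := p
  induction i₀ using Fin.cases with
  | zero => exact ⟨n₀, m₀, hp⟩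
  | succ i₁ => simp [UpdAux.trunc, hp] at hh

/-- Key lemma: every `k`-ary update procedure has a zero (only the update condition
is needed for existence). Proved by induction on `k`; the base case is trivial
(`Fin 0` is empty) and the induction step uses the freezing argument. -/
lemma UpdAux.zero_exists : ∀ (k : ℕ) (U : (Fin k → ℕ → ℕ) → Option (Fin k × ℕ × ℕ)),
    (∀ (f g : Fin k → ℕ → ℕ) (i : Fin k) (n m h l : ℕ),
      (∀ j : Fin k, j < i → f j = g j) →
      U f = some (i, n, m) → g i n = m → U g = some (i, h, l) → h ≠ n) →
    ∃ f : Fin k → ℕ → ℕ, U f = none := by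
  intro k
  induction k with
  | zero =>
    intro U _
    refine ⟨fun i => i.elim0, ?_⟩
    rcases hU : U (fun i => i.elim0) with _ | ⟨i, q⟩
    · rfl
    · exact i.elim0
  | succ k IHk =>
    intro U hupd
    by_contra hno
    push_neg at hno
    -- Every tuple gets some update
    have hsome : ∀ f : Fin (k + 1) → ℕ → ℕ, ∃ p, U f = some p := by
      intro f
      rcases hU : U f with _ | p
      · exact absurd hU (hno f)
      · exact ⟨p, rfl⟩
    -- The truncated procedure satisfies the update condition
    have htrunc_upd : ∀ f₀ : ℕ → ℕ, ∀ (f g : Fin k → ℕ → ℕ) (i : Fin k) (n m h l : ℕ),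
        (∀ j : Fin k, j < i → f j = g j) →
        UpdAux.trunc k U f₀ f = some (i, n, m) → g i n = m →
        UpdAux.trunc k U f₀ g = some (i, h, l) → h ≠ n := by
      intro f₀ f g i n m h l hpre hf hgv hgmain
      have hf' := UpdAux.trunc_some hf
      have hg' := UpdAux.trunc_some hgmain
      refine hupd (Fin.cons f₀ f) (Fin.cons f₀ g) i.succ n m h l ?_ hf' ?_ hg'
      · intro j hj
        induction j using Fin.cases with
        | zero => simp
        | succ j' =>
          have : j' < i := Fin.succ_lt_succ_iff.mp hj
          simp [Fin.cons_succ, hpre j' this]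
      · simpa [Fin.cons_succ] using hgv
    -- Inner zeros exist by the induction hypothesis
    have hH : ∀ f₀ : ℕ → ℕ, ∃ h : Fin k → ℕ → ℕ, UpdAux.trunc k U f₀ h = none :=
      fun f₀ => IHk (UpdAux.trunc k U f₀) (htrunc_upd f₀)
    choose H hHspec using hH
    -- On an inner zero, the update must be at coordinate 0
    have hNM : ∀ f₀ : ℕ → ℕ, ∃ n m : ℕ,
        U (Fin.cons f₀ (H f₀)) = some (0, n, m) := by
      intro f₀
      obtain ⟨p, hp⟩ := hsome (Fin.cons f₀ (H f₀))
      exact UpdAux.trunc_none (hHspec f₀) hp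
    choose N M hNMspec using hNM
    -- The freeze condition holds for N, M
    refine UpdAux.update_freeze N M ?_
    intro f₀ g₀ hval
    refine hupd (Fin.cons f₀ (H f₀)) (Fin.cons g₀ (H g₀)) 0 (N f₀) (M f₀) (N g₀) (M g₀)
      ?_ (hNMspec f₀) ?_ (hNMspec g₀)
    · intro j hj
      exact absurd hj (Fin.not_lt_zero j)
    · simpa [Fin.cons_zero] using hval

/-- Zero theorem for k-ary update procedures (Avigad): every k-ary update
procedure has a zero, and in fact one where each component has finite support. -/
theorem zero_theorem_kary_update_procedure (k : ℕ) (hk : 1 ≤ k)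
    (U : (Fin k → ℕ → ℕ) → Option (Fin k × ℕ × ℕ))
    -- continuity
    (hcont : ∀ f : Fin k → ℕ → ℕ, ∃ A : Finset (Fin k × ℕ),
      ∀ g : Fin k → ℕ → ℕ, (∀ p ∈ A, g p.1 p.2 = f p.1 p.2) → U g = U f)
    -- update condition
    (hupd : ∀ (f g : Fin k → ℕ → ℕ) (i : Fin k) (n m h l : ℕ),
      (∀ j : Fin k, j < i → f j = g j) →
      U f = some (i, n, m) → g i n = m → U g = some (i, h, l) → h ≠ n) :
    (∃ f : Fin k → ℕ → ℕ, U f = none) ∧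
    (∃ f : Fin k → ℕ → ℕ, (∀ i, {n : ℕ | f i n ≠ 0}.Finite) ∧ U f = none) := by
  obtain ⟨f, hf⟩ := UpdAux.zero_exists k U hupd
  refine ⟨⟨f, hf⟩, ?_⟩
  obtain ⟨A, hA⟩ := hcont f
  refine ⟨fun i n => if (i, n) ∈ A then f i n else 0, fun i => ?_, ?_⟩
  · apply Set.Finite.subset (A.image Prod.snd).finite_toSet
    intro n hn
    simp only [Set.mem_setOf_eq] at hn
    by_cases hmem : (i, n) ∈ A
    · simp only [Finset.coe_image, Set.mem_image, Finset.mem_coe]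
      exact ⟨(i, n), hmem, rfl⟩
    · simp [hmem] at hn
  · rw [hA]
    · exact hf
    · intro p hp
      simp [show (p.1, p.2) ∈ A from hp]
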